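/- Let X be a standard Borel space, let κ be a Markov kernel from X to X, and for a ∈ X let P_a denote the law on the trajectory space X^ℕ of the time-homogeneous Markov chain (x_k)_{k∈ℕ} with x_0 = a and transition kernel κ. Let A, B, C ⊆ X be measurable sets and let p₁, p₂ ∈ [0, 1] be such that P_a{∃ k ∈ ℕ, x_k ∈ B} ≤ p₁ for every a ∈ A, and P_b{∃ k ∈ ℕ with k ≥ 1, x_k ∈ C} ≤ p₂ for every b ∈ B. Then for every a ∈ A, P_a{∃ k ∈ ℕ, ∃ m > k, x_k ∈ B and x_m ∈ C} ≤ p₁ · p₂. -/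

import Mathlib

open MeasureTheory ProbabilityTheory
open scoped ENNReal

section Aux

variable {X : Type*} [MeasurableSpace X]

/-- the shift on trajectory space -/
private def mshift : (ℕ → X) → (ℕ → X) := fun ω n => ω (n + 1)

private lemma measurable_mshift : Measurable (mshift (X := X)) :=
  measurable_pi_lambda _ fun n => measurable_pi_apply _

/-- prepend a point to a trajectory -/
private def mprep (a : X) : (ℕ → X) → (ℕ → X) := fun ω n => Nat.casesOn n a ω

private lemma measurable_mprep (a : X) : Measurable (mprep a) :=
  measurable_pi_lambda _ fun n => by
    cases n with
    | zero => exact measurable_const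
    | succ m => exact measurable_pi_apply m

@[simp] private lemma mshift_mprep (a : X) (ω : ℕ → X) : mshift (mprep a ω) = ω := rfl
@[simp] private lemma mprep_zero (a : X) (ω : ℕ → X) : mprep a ω 0 = a := rfl

/-- the event: no visit to `B` before `k`, visit `B` at `k`, visit `C` strictly after `k` -/
private def Eset (B C : Set X) (k : ℕ) : Set (ℕ → X) :=
  {ω | (∀ j < k, ω j ∉ B) ∧ ω k ∈ B ∧ ∃ m, k < m ∧ ω m ∈ C}

/-- the event: first visit to `B` at time `k` -/
private def Fset (B : Set X) (k : ℕ) : Set (ℕ → X) :=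
  {ω | (∀ j < k, ω j ∉ B) ∧ ω k ∈ B}

private lemma measurable_Eset {B C : Set X} (hB : MeasurableSet B) (hC : MeasurableSet C)
    (k : ℕ) : MeasurableSet (Eset B C k) := by
  have h1 : MeasurableSet {ω : ℕ → X | ∀ j < k, ω j ∉ B} := by
    have : {ω : ℕ → X | ∀ j < k, ω j ∉ B} = ⋂ j ∈ {j | j < k}, (fun ω : ℕ → X => ω j) ⁻¹' Bᶜ := by
      ext ω; simp
    rw [this]
    exact MeasurableSet.biInter (Set.to_countable _)
      fun j _ => (measurable_pi_apply j) hB.compl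
  have h2 : MeasurableSet {ω : ℕ → X | ω k ∈ B} := (measurable_pi_apply k) hB
  have h3 : MeasurableSet {ω : ℕ → X | ∃ m, k < m ∧ ω m ∈ C} := by
    have : {ω : ℕ → X | ∃ m, k < m ∧ ω m ∈ C}
        = ⋃ m ∈ {m | k < m}, (fun ω : ℕ → X => ω m) ⁻¹' C := by
      ext ω; simp
    rw [this]
    exact MeasurableSet.biUnion (Set.to_countable _)
      fun m _ => (measurable_pi_apply m) hC
  exact (h1.inter (h2.inter h3))

private lemma measurable_Fset {B : Set X} (hB : MeasurableSet B)
    (k : ℕ) : MeasurableSet (Fset B k) := by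
  have h1 : MeasurableSet {ω : ℕ → X | ∀ j < k, ω j ∉ B} := by
    have : {ω : ℕ → X | ∀ j < k, ω j ∉ B} = ⋂ j ∈ {j | j < k}, (fun ω : ℕ → X => ω j) ⁻¹' Bᶜ := by
      ext ω; simp
    rw [this]
    exact MeasurableSet.biInter (Set.to_countable _)
      fun j _ => (measurable_pi_apply j) hB.compl
  exact h1.inter ((measurable_pi_apply k) hB)

private lemma Eset_succ (B C : Set X) (k : ℕ) :
    Eset B C (k + 1) = {ω : ℕ → X | ω 0 ∉ B} ∩ mshift ⁻¹' Eset B C k := by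
  ext ω
  constructor
  · rintro ⟨h1, h2, m, hm, hmc⟩
    refine ⟨h1 0 (Nat.succ_pos k), fun j hj => h1 (j + 1) (by omega), h2, ?_⟩
    cases m with
    | zero => omega
    | succ n => exact ⟨n, by omega, hmc⟩
  · rintro ⟨h0, h1, h2, m, hm, hmc⟩
    refine ⟨?_, h2, m + 1, by omega, hmc⟩
    intro j hj
    cases j with
    | zero => exact h0
    | succ i => exact h1 i (by omega)

private lemma Fset_succ (B : Set X) (k : ℕ) :
    Fset B (k + 1) = {ω : ℕ → X | ω 0 ∉ B} ∩ mshift ⁻¹' Fset B k := by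
  ext ω
  constructor
  · rintro ⟨h1, h2⟩
    exact ⟨h1 0 (Nat.succ_pos k), fun j hj => h1 (j + 1) (by omega), h2⟩
  · rintro ⟨h0, h1, h2⟩
    refine ⟨?_, h2⟩
    intro j hj
    cases j with
    | zero => exact h0
    | succ i => exact h1 i (by omega)

/-- The full one–step decomposition of the trajectory law. -/
private lemma P_decomp [StandardBorelSpace X] (κ : Kernel X X) (P : X → Measure (ℕ → X))
    (hP0 : ∀ a : X, (P a).map (fun ω : ℕ → X => ω 0) = Measure.dirac a)
    (hPshift : ∀ a : X, (P a).map mshift = (κ a).bind P) (a : X) :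
    P a = ((κ a).bind P).map (mprep a) := by
  have h0 : ∀ᵐ ω ∂(P a), ω 0 = a := by
    rw [ae_iff]
    have : {ω : ℕ → X | ¬ ω 0 = a} = (fun ω : ℕ → X => ω 0) ⁻¹' ({a}ᶜ) := by
      ext ω; simp
    rw [this, ← Measure.map_apply (measurable_pi_apply 0) (measurableSet_singleton a).compl,
      hP0]
    simp
  have hae : (fun ω : ℕ → X => mprep a (mshift ω)) =ᵐ[P a] id := by
    filter_upwards [h0] with ω hω
    funext n
    cases n with
    | zero => simpa [mprep, mshift] using hω.symm
    | succ m => rfl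
  calc P a = (P a).map id := (Measure.map_id).symm
    _ = (P a).map (fun ω => mprep a (mshift ω)) := (Measure.map_congr hae).symm
    _ = ((P a).map mshift).map (mprep a) :=
        (Measure.map_map (measurable_mprep a) measurable_mshift).symm
    _ = ((κ a).bind P).map (mprep a) := by rw [hPshift]

end Aux

/-- Product rule for sequential reachability probabilities (the probabilistic content
of Theorem 3 of the paper): for a time-homogeneous Markov chain with transition kernel
`κ` on a standard Borel space, if from every point of `A` the chain reaches `B` with
probability at most `p₁` and from every point of `B` it reaches `C` (in at least one
step) with probability at most `p₂`, then from every point of `A` the probability of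
visiting `B` and strictly afterwards `C` is at most `p₁ * p₂`.  The family `a ↦ P a`
of trajectory laws is characterized by: the chain starts at `a` (`hP0`) and the law of
the shifted trajectory is `∫ P_y κ(a, dy)` (`hPshift`). -/
theorem markov_sequential_reachability
    {X : Type*} [MeasurableSpace X] [StandardBorelSpace X]
    (κ : Kernel X X) [IsMarkovKernel κ]
    (P : X → Measure (ℕ → X)) (hPmeas : Measurable P)
    (hPprob : ∀ a, IsProbabilityMeasure (P a))
    (hP0 : ∀ a : X, (P a).map (fun ω : ℕ → X => ω 0) = Measure.dirac a)
    (hPshift : ∀ a : X, (P a).map (fun (ω : ℕ → X) (n : ℕ) => ω (n + 1)) = (κ a).bind P)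
    (A B C : Set X) (hA : MeasurableSet A) (hB : MeasurableSet B) (hC : MeasurableSet C)
    (p₁ p₂ : ℝ≥0∞) (hp₁ : p₁ ≤ 1) (hp₂ : p₂ ≤ 1)
    (hreachB : ∀ a ∈ A, P a {ω : ℕ → X | ∃ k : ℕ, ω k ∈ B} ≤ p₁)
    (hreachC : ∀ b ∈ B, P b {ω : ℕ → X | ∃ k : ℕ, 1 ≤ k ∧ ω k ∈ C} ≤ p₂) :
    ∀ a ∈ A, P a {ω : ℕ → X | ∃ k : ℕ, ∃ m : ℕ, k < m ∧ ω k ∈ B ∧ ω m ∈ C} ≤ p₁ * p₂ := by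
  classical
  have hdecomp := P_decomp κ P hP0 hPshift
  have hEm : ∀ k, MeasurableSet (Eset B C k) := measurable_Eset hB hC
  have hFm : ∀ k, MeasurableSet (Fset B k) := measurable_Fset hB
  have hmeasE : ∀ k, Measurable (fun y => P y (Eset B C k)) :=
    fun k => Measure.measurable_measure.mp hPmeas _ (hEm k)
  have hmeasF : ∀ k, Measurable (fun y => P y (Fset B k)) :=
    fun k => Measure.measurable_measure.mp hPmeas _ (hFm k)
  -- probability that the first visit to B is at k and C is visited afterwards
  have key : ∀ k a, P a (Eset B C k) ≤ p₂ * P a (Fset B k) := by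
    intro k
    induction k with
    | zero =>
      intro a
      have hF0 : Fset B 0 = {ω : ℕ → X | ω 0 ∈ B} := by
        ext ω; simp [Fset]
      have hPF : P a (Fset B 0) = Set.indicator B 1 a := by
        rw [hF0]
        have : {ω : ℕ → X | ω 0 ∈ B} = (fun ω : ℕ → X => ω 0) ⁻¹' B := rfl
        rw [this, ← Measure.map_apply (measurable_pi_apply 0) hB, hP0,
          Measure.dirac_apply' a hB]
      by_cases haB : a ∈ B
      · have hsub : Eset B C 0 ⊆ {ω : ℕ → X | ∃ m : ℕ, 1 ≤ m ∧ ω m ∈ C} := by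
          rintro ω ⟨_, _, m, hm, hc⟩; exact ⟨m, hm, hc⟩
        calc P a (Eset B C 0) ≤ p₂ := le_trans (measure_mono hsub) (hreachC a haB)
          _ = p₂ * P a (Fset B 0) := by rw [hPF, Set.indicator_of_mem haB]; simp
      · have hsub : Eset B C 0 ⊆ Fset B 0 := by
          rintro ω ⟨h1, h2, _⟩; exact ⟨h1, h2⟩
        have : P a (Eset B C 0) = 0 := by
          have hle : P a (Eset B C 0) ≤ P a (Fset B 0) := measure_mono hsub
          rw [hPF, Set.indicator_of_notMem haB] at hle
          exact le_antisymm hle zero_le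
        rw [this]; exact zero_le
    | succ k ih =>
      intro a
      have hpreE : mprep a ⁻¹' Eset B C (k + 1)
          = {ω : ℕ → X | a ∉ B ∧ ω ∈ Eset B C k} := by
        rw [Eset_succ]
        ext ω
        simp [Set.mem_preimage, Set.mem_inter_iff]
      have hpreF : mprep a ⁻¹' Fset B (k + 1)
          = {ω : ℕ → X | a ∉ B ∧ ω ∈ Fset B k} := by
        rw [Fset_succ]
        ext ω
        simp [Set.mem_preimage, Set.mem_inter_iff]
      by_cases haB : a ∈ B
      · have : P a (Eset B C (k + 1)) = 0 := by
          rw [hdecomp a, Measure.map_apply (measurable_mprep a) (hEm (k + 1)), hpreE]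
          have : {ω : ℕ → X | a ∉ B ∧ ω ∈ Eset B C k} = ∅ := by
            ext ω; simp [haB]
          rw [this, measure_empty]
        rw [this]; exact zero_le
      · have hEeq : {ω : ℕ → X | a ∉ B ∧ ω ∈ Eset B C k} = Eset B C k := by
          ext ω; simp [haB]
        have hFeq : {ω : ℕ → X | a ∉ B ∧ ω ∈ Fset B k} = Fset B k := by
          ext ω; simp [haB]
        have hE1 : P a (Eset B C (k + 1)) = ∫⁻ y, P y (Eset B C k) ∂(κ a) := by
          rw [hdecomp a, Measure.map_apply (measurable_mprep a) (hEm (k + 1)), hpreE, hEeq,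
            Measure.bind_apply (hEm k) hPmeas.aemeasurable]
        have hF1 : P a (Fset B (k + 1)) = ∫⁻ y, P y (Fset B k) ∂(κ a) := by
          rw [hdecomp a, Measure.map_apply (measurable_mprep a) (hFm (k + 1)), hpreF, hFeq,
            Measure.bind_apply (hFm k) hPmeas.aemeasurable]
        rw [hE1, hF1, ← lintegral_const_mul p₂ (hmeasF k)]
        exact lintegral_mono fun y => ih y
  intro a ha
  -- the target event is contained in the disjoint union of the Eset's
  have hsub : {ω : ℕ → X | ∃ k : ℕ, ∃ m : ℕ, k < m ∧ ω k ∈ B ∧ ω m ∈ C}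
      ⊆ ⋃ k, Eset B C k := by
    rintro ω ⟨k, m, hkm, hkB, hmC⟩
    have hex : ∃ j, ω j ∈ B := ⟨k, hkB⟩
    refine Set.mem_iUnion.2 ⟨Nat.find hex, fun j hj => Nat.find_min hex hj,
      Nat.find_spec hex, m, ?_, hmC⟩
    exact lt_of_le_of_lt (Nat.find_min' hex hkB) hkm
  have hFunion : (⋃ k, Fset B k) = {ω : ℕ → X | ∃ k : ℕ, ω k ∈ B} := by
    ext ω
    constructor
    · rintro hω
      obtain ⟨k, _, hk⟩ := Set.mem_iUnion.1 hω
      exact ⟨k, hk⟩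
    · rintro ⟨k, hk⟩
      have hex : ∃ j, ω j ∈ B := ⟨k, hk⟩
      exact Set.mem_iUnion.2 ⟨Nat.find hex, fun j hj => Nat.find_min hex hj,
        Nat.find_spec hex⟩
  have hdisj : Pairwise (Function.onFun Disjoint (Fset B (X := X))) := by
    intro i j hij
    rw [Function.onFun, Set.disjoint_left]
    rintro ω ⟨hi1, hi2⟩ ⟨hj1, hj2⟩
    rcases lt_or_gt_of_ne hij with h | h
    · exact hj1 i h hi2
    · exact hi1 j h hj2
  calc P a {ω : ℕ → X | ∃ k : ℕ, ∃ m : ℕ, k < m ∧ ω k ∈ B ∧ ω m ∈ C}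
      ≤ P a (⋃ k, Eset B C k) := measure_mono hsub
    _ ≤ ∑' k, P a (Eset B C k) := measure_iUnion_le _
    _ ≤ ∑' k, p₂ * P a (Fset B k) := ENNReal.tsum_le_tsum fun k => key k a
    _ = p₂ * ∑' k, P a (Fset B k) := ENNReal.tsum_mul_left
    _ = p₂ * P a (⋃ k, Fset B k) := by rw [measure_iUnion hdisj hFm]
    _ = p₂ * P a {ω : ℕ → X | ∃ k : ℕ, ω k ∈ B} := by rw [hFunion]
    _ ≤ p₂ * p₁ := mul_le_mul_right (hreachB a ha) p₂
    _ = p₁ * p₂ := mul_comm _ _
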